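/- In an HRLQ instance where every resident's preference list has length at most ℓ₁ and every hospital has lower and upper quota at most 1, every maximal feasible envy-free matching M satisfies |OPT| ≤ ℓ₁·|M|, where OPT is a maximum-size feasible envy-free matching. (In particular, a maximal envy-free matching is an ℓ₁-approximation of MAXEFM.) -/

import Mathlib

/-- An HRLQ instance: bipartite graph on residents `R` and hospitals `H` with
strict preferences encoded as rank functions (lower rank = more preferred)
and lower/upper quotas per hospital. -/
structure HRLQ (R H : Type) where
  E : R → H → Prop
  rPref : R → H → ℕ
  hPref : H → R → ℕ
  lq : H → ℕ
  uq : H → ℕ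

namespace HRLQ

variable {R H : Type}

/-- residents matched to hospital `h` -/
def matchedTo (M : R → Option H) (h : H) : Set R := {r | M r = some h}

/-- size of a matching -/
noncomputable def msize (M : R → Option H) : ℕ := {r | M r ≠ none}.ncard

variable (I : HRLQ R H)

/-- resident `r` strictly prefers hospital `h` to assignment `o`
    (being unmatched is least preferred); `h` must be acceptable to `r`. -/
def PrefersH (r : R) (h : H) (o : Option H) : Prop :=
  I.E r h ∧ ∀ h', o = some h' → I.rPref r h < I.rPref r h'

def IsMatching (M : R → Option H) : Prop :=
  (∀ r h, M r = some h → I.E r h) ∧ ∀ h, (matchedTo M h).ncard ≤ I.uq h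

def Feasible (M : R → Option H) : Prop :=
  ∀ h, I.lq h ≤ (matchedTo M h).ncard

def Blocks (M : R → Option H) (r : R) (h : H) : Prop :=
  I.E r h ∧ M r ≠ some h ∧ I.PrefersH r h (M r) ∧
    ((matchedTo M h).ncard < I.uq h ∨ ∃ r' ∈ matchedTo M h, I.hPref h r < I.hPref h r')

def Stable (M : R → Option H) : Prop := ∀ r h, ¬ I.Blocks M r h

def Envies (M : R → Option H) (r r' : R) : Prop :=
  ∃ h, M r' = some h ∧ I.PrefersH r h (M r) ∧ I.hPref h r < I.hPref h r'

def EnvyFree (M : R → Option H) : Prop := ∀ r r', ¬ I.Envies M r r'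

def RelaxedStable (M : R → Option H) : Prop :=
  (∀ h, {r | r ∈ matchedTo M h ∧ ∃ h', I.Blocks M r h'}.ncard ≤ I.lq h) ∧
  ∀ r, M r = none → ∀ h, ¬ I.Blocks M r h

/-- preferences are strict -/
def StrictPrefs : Prop :=
  (∀ r, Function.Injective (I.rPref r)) ∧ ∀ h, Function.Injective (I.hPref h)

end HRLQ

/-- In an HRLQ instance with resident lists of length at most ℓ₁ and all hospital
quotas at most 1, every maximal feasible envy-free matching M is an
ℓ₁-approximation of a maximum-size feasible envy-free matching. -/
theorem maximal_envy_free_ell1_approx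
    {R H : Type} [Fintype R] [Fintype H] [DecidableEq R] (I : HRLQ R H)
    (hstrict : I.StrictPrefs) (ℓ₁ : ℕ)
    (hlen : ∀ r, {h | I.E r h}.ncard ≤ ℓ₁)
    (hq : ∀ h, I.lq h ≤ 1 ∧ I.uq h ≤ 1)
    (M : R → Option H)
    (hM : I.IsMatching M ∧ I.Feasible M ∧ I.EnvyFree M)
    (hmaximal : ∀ r h, M r = none → I.E r h →
      ¬ (I.IsMatching (Function.update M r (some h)) ∧
         I.EnvyFree (Function.update M r (some h)))) :
    ∀ OPT, I.IsMatching OPT → I.Feasible OPT → I.EnvyFree OPT →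
      HRLQ.msize OPT ≤ ℓ₁ * HRLQ.msize M := by

  classical
  intro OPT hOm hOf hOe
  obtain ⟨hMe, hMu⟩ := hM.1
  have hMef := hM.2.2
  -- Lemma A: every hospital matched in OPT has an M-matched acceptable resident
  have lemA : ∀ h : H, (∃ r, OPT r = some h) → ∃ r', M r' ≠ none ∧ I.E r' h := by
    rintro h ⟨r, hrh⟩
    have hEr : I.E r h := hOm.1 r h hrh
    have huq1 : 1 ≤ I.uq h := by
      have hsub : ({r} : Set R) ⊆ HRLQ.matchedTo OPT h := by
        intro x hx
        rw [Set.mem_singleton_iff] at hx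
        subst hx
        exact hrh
      calc 1 = ({r} : Set R).ncard := (Set.ncard_singleton r).symm
        _ ≤ (HRLQ.matchedTo OPT h).ncard := Set.ncard_le_ncard hsub (Set.toFinite _)
        _ ≤ I.uq h := hOm.2 h
    by_cases hmat : ∃ r', M r' = some h
    · obtain ⟨r', hr'⟩ := hmat
      exact ⟨r', by simp [hr'], hMe r' h hr'⟩
    · push_neg at hmat
      have hAne : (Finset.univ.filter (fun r' => I.E r' h)).Nonempty :=
        ⟨r, by simp [hEr]⟩
      obtain ⟨rs, hrsA, hrsmin⟩ := Finset.exists_min_image _ (I.hPref h) hAne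
      have hErs : I.E rs h := (Finset.mem_filter.mp hrsA).2
      refine ⟨rs, fun hnone => ?_, hErs⟩
      refine hmaximal rs h hnone hErs ⟨⟨?_, ?_⟩, ?_⟩
      · intro x h' hx
        rcases eq_or_ne x rs with rfl | hne
        · rw [Function.update_self] at hx
          cases hx
          exact hErs
        · rw [Function.update_of_ne hne] at hx
          exact hMe x h' hx
      · intro h''
        rcases eq_or_ne h'' h with rfl | hne
        · have hset : HRLQ.matchedTo (Function.update M rs (some h'')) h'' = {rs} := by
            ext x
            simp only [HRLQ.matchedTo, Set.mem_setOf_eq, Set.mem_singleton_iff]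
            rcases eq_or_ne x rs with rfl | hxne
            · simp [Function.update_self]
            · simp only [Function.update_of_ne hxne]
              exact ⟨fun hx => absurd hx (hmat x), fun hx => absurd hx hxne⟩
          rw [hset, Set.ncard_singleton]
          exact huq1
        · have hsub : HRLQ.matchedTo (Function.update M rs (some h)) h'' ⊆
              HRLQ.matchedTo M h'' := by
            intro x hx
            simp only [HRLQ.matchedTo, Set.mem_setOf_eq] at hx ⊢
            rcases eq_or_ne x rs with rfl | hxne
            · rw [Function.update_self] at hx
              cases hx
              exact absurd rfl hne
            · rwa [Function.update_of_ne hxne] at hx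
          exact le_trans (Set.ncard_le_ncard hsub (Set.toFinite _)) (hMu h'')
      · rintro a b ⟨h', hb, hpref, hrank⟩
        rcases eq_or_ne b rs with rfl | hbne
        · rw [Function.update_self] at hb
          obtain rfl : h = h' := by injection hb
          rcases eq_or_ne a b with rfl | hane
          · exact lt_irrefl _ hrank
          · have hEa : I.E a h := hpref.1
            have hmin : I.hPref h b ≤ I.hPref h a := hrsmin a (by simp [hEa])
            omega
        · rw [Function.update_of_ne hbne] at hb
          rcases eq_or_ne a rs with rfl | hane
          · exact hMef a b ⟨h', hb,
              ⟨hpref.1, fun h'' hc => by rw [hnone] at hc; cases hc⟩, hrank⟩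
          · rw [Function.update_of_ne hane] at hpref
            exact hMef a b ⟨h', hb, hpref, hrank⟩
  by_cases hSne : ({r | OPT r ≠ none} : Set R).Nonempty
  swap
  · rw [Set.not_nonempty_iff_eq_empty] at hSne
    simp [HRLQ.msize, hSne]
  obtain ⟨r₀, hr₀⟩ := hSne
  obtain ⟨h₀, hh₀⟩ := Option.ne_none_iff_exists'.mp hr₀
  set T : Set (R × H) := {p | M p.1 ≠ none ∧ I.E p.1 p.2} with hT
  set g : R → R × H := fun r =>
    if hr : ∃ h, OPT r = some h then
      ((lemA hr.choose ⟨r, hr.choose_spec⟩).choose, hr.choose)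
    else (r₀, h₀) with hg
  have hmaps : ∀ r ∈ {r | OPT r ≠ none}, g r ∈ T := by
    intro r hr
    have hex : ∃ h, OPT r = some h := Option.ne_none_iff_exists'.mp hr
    rw [hg]
    simp only [dif_pos hex]
    exact (lemA hex.choose ⟨r, hex.choose_spec⟩).choose_spec
  have hinj : Set.InjOn g {r | OPT r ≠ none} := by
    intro r hr r2 hr2 heq
    have hex : ∃ h, OPT r = some h := Option.ne_none_iff_exists'.mp hr
    have hex2 : ∃ h, OPT r2 = some h := Option.ne_none_iff_exists'.mp hr2
    rw [hg] at heq
    simp only [dif_pos hex, dif_pos hex2, Prod.mk.injEq] at heq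
    by_contra hne'
    have hsub : ({r, r2} : Set R) ⊆ HRLQ.matchedTo OPT hex.choose := by
      rintro x (rfl | rfl)
      · exact hex.choose_spec
      · rw [heq.2]
        exact hex2.choose_spec
    have h2le : 2 ≤ I.uq hex.choose := by
      calc 2 = ({r, r2} : Set R).ncard := (Set.ncard_pair hne').symm
        _ ≤ (HRLQ.matchedTo OPT hex.choose).ncard :=
            Set.ncard_le_ncard hsub (Set.toFinite _)
        _ ≤ I.uq hex.choose := hOm.2 _
    have := (hq hex.choose).2
    omega
  have h1 : HRLQ.msize OPT ≤ T.ncard :=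
    Set.ncard_le_ncard_of_injOn g hmaps hinj (Set.toFinite T)
  refine h1.trans ?_
  set Tf : Finset (R × H) := Finset.univ.filter (fun p => M p.1 ≠ none ∧ I.E p.1 p.2)
    with hTf
  have hTeq : T = ↑Tf := by
    ext p
    simp [hTf, hT]
  rw [hTeq, Set.ncard_coe_finset]
  set Sf : Finset R := Finset.univ.filter (fun r => M r ≠ none) with hSf
  have hmf : HRLQ.msize M = Sf.card := by
    rw [HRLQ.msize]
    have hst : {r | M r ≠ none} = ↑Sf := by ext r; simp [hSf]
    rw [hst, Set.ncard_coe_finset]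
  have hcard := Finset.card_eq_sum_card_fiberwise (f := Prod.fst) (s := Tf) (t := Sf)
      (fun p hp => by
        simp only [hSf, Finset.mem_coe, Finset.mem_filter, Finset.mem_univ, true_and]
        exact (Finset.mem_filter.mp hp).2.1)
  rw [hcard, hmf, mul_comm]
  refine le_trans (Finset.sum_le_sum ?_) (by rw [Finset.sum_const, smul_eq_mul])
  intro r' _
  have hfib : (Tf.filter (fun p => p.1 = r')).card ≤
      (Finset.univ.filter (fun h => I.E r' h)).card := by
    apply Finset.card_le_card_of_injOn Prod.snd
    · intro p hp
      simp only [hTf, Finset.mem_coe, Finset.mem_filter, Finset.mem_univ, true_and] at hp ⊢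
      rcases hp with ⟨⟨_, hE⟩, hfst⟩
      exact hfst ▸ hE
    · intro p hp q hq hpq
      simp only [Finset.mem_coe, Finset.mem_filter] at hp hq
      exact Prod.ext (hp.2.trans hq.2.symm) hpq
  refine hfib.trans ?_
  have hl := hlen r'
  have heq2 : {h | I.E r' h} = ↑(Finset.univ.filter (fun h => I.E r' h)) := by
    ext x; simp
  rwa [heq2, Set.ncard_coe_finset] at hl
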